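/- arXiv:2012.00947 — 2 statements merged into one kernel-verified Lean document; each statement's English description precedes it below -/
import Mathlib

section
/- (Eilenberg–Zilber lemma) Let K be a simplicial set and σ an n-simplex of K. Then there exist a unique m ∈ ℕ, a unique surjective monotone map θ : [n] → [m] in the simplex category, and a unique nondegenerate m-simplex τ of K such that σ = θ*(τ), where θ*(τ) = K.map(θ.op)(τ). -/
open CategoryTheory Simplicial

/-- A simplex of a simplicial set is degenerate if it is the image of a simplex of strictly
smaller dimension under a surjective structure map (equivalently, if it lies in the image of
some degeneracy operator). -/
def IsDegen (K : SSet) {l : ℕ} (τ : K _⦋l⦌) : Prop :=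
  ∃ (m : ℕ) (θ : SimplexCategory.mk l ⟶ SimplexCategory.mk m) (τ' : K _⦋m⦌),
    m < l ∧ Function.Surjective ⇑θ.toOrderHom ∧ τ = K.map θ.op τ'

namespace EZAux

open SimplexCategory

/-- Epi-mono factorization through a `mk k`. -/
lemma factor {a b : ℕ} (f : SimplexCategory.mk a ⟶ SimplexCategory.mk b) :
    ∃ (k : ℕ) (s : SimplexCategory.mk a ⟶ SimplexCategory.mk k)
      (i : SimplexCategory.mk k ⟶ SimplexCategory.mk b),
      Function.Surjective ⇑s.toOrderHom ∧ Function.Injective ⇑i.toOrderHom ∧ s ≫ i = f := by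
  refine ⟨(Limits.image f).len,
    Limits.factorThruImage f ≫ eqToHom (mk_len (Limits.image f)).symm,
    eqToHom (mk_len (Limits.image f)) ≫ Limits.image.ι f, ?_, ?_, ?_⟩
  · rw [← SimplexCategory.epi_iff_surjective]; infer_instance
  · rw [← SimplexCategory.mono_iff_injective]; infer_instance
  · simp

/-- Existence part, by strong induction. -/
lemma exists_pres (K : SSet) : ∀ (n : ℕ) (σ : K _⦋n⦌),
    ∃ (m : ℕ) (θ : SimplexCategory.mk n ⟶ SimplexCategory.mk m) (τ : K _⦋m⦌),
      Function.Surjective ⇑θ.toOrderHom ∧ ¬ IsDegen K τ ∧ σ = K.map θ.op τ := by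
  intro n
  induction n using Nat.strong_induction_on with
  | _ n ih =>
    intro σ
    by_cases h : IsDegen K σ
    · obtain ⟨m, θ, τ', hm, hθ, hστ⟩ := h
      obtain ⟨k, θ', τ, hθ', hτ, hτ'⟩ := ih m hm τ'
      refine ⟨k, θ ≫ θ', τ, ?_, hτ, ?_⟩
      · rw [comp_toOrderHom]; exact hθ'.comp hθ
      · rw [hστ, hτ', op_comp, K.map_comp]; rfl
    · exact ⟨n, 𝟙 _, σ, Function.surjective_id, h,
        (FunctorToTypes.map_id_apply K σ).symm⟩

/-- For a surjective `θ` and any `x`, there is a monotone section of `θ` sending `θ x` to `x`. -/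
lemma exists_section {n m : ℕ} (θ : SimplexCategory.mk n ⟶ SimplexCategory.mk m)
    (hθ : Function.Surjective ⇑θ.toOrderHom) (x : Fin (n + 1)) :
    ∃ d : SimplexCategory.mk m ⟶ SimplexCategory.mk n,
      d ≫ θ = 𝟙 _ ∧ d.toOrderHom (θ.toOrderHom x) = x := by
  classical
  set f : Fin (n+1) → Fin (m+1) := ⇑θ.toOrderHom with hf
  have hmono : Monotone f := θ.toOrderHom.monotone
  -- preimage sets
  have hne : ∀ y : Fin (m+1), ((Finset.univ.filter (fun z => f z = y))).Nonempty := by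
    intro y
    obtain ⟨z, hz⟩ := hθ y
    exact ⟨z, Finset.mem_filter.mpr ⟨Finset.mem_univ _, hz⟩⟩
  have hne' : ∀ y : Fin (m+1), y ≤ f x →
      ((Finset.univ.filter (fun z => f z = y ∧ z ≤ x))).Nonempty := by
    intro y hy
    set z := (Finset.univ.filter (fun z => f z = y)).min' (hne y) with hz
    have hzmem := (Finset.univ.filter (fun z => f z = y)).min'_mem (hne y)
    simp only [Finset.mem_filter, Finset.mem_univ, true_and] at hzmem
    refine ⟨z, ?_⟩
    simp only [Finset.mem_filter, Finset.mem_univ, true_and]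
    refine ⟨hzmem, ?_⟩
    by_contra hzx
    push_neg at hzx
    have : f x ≤ f z := hmono hzx.le
    rw [hzmem] at this
    have : y = f x := le_antisymm hy this
    -- then x is in the preimage of y, contradicting minimality of z
    have hxmem : x ∈ Finset.univ.filter (fun z => f z = y) := by
      simp [this.symm]
    exact absurd (Finset.min'_le _ _ hxmem) (not_le.mpr hzx)
  -- the section
  set g : Fin (m+1) → Fin (n+1) := fun y =>
    if hy : y ≤ f x then (Finset.univ.filter (fun z => f z = y ∧ z ≤ x)).max' (hne' y hy)
    else (Finset.univ.filter (fun z => f z = y)).min' (hne y) with hg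
  have hfg : ∀ y, f (g y) = y := by
    intro y
    simp only [hg]
    split_ifs with hy
    · have := (Finset.univ.filter (fun z => f z = y ∧ z ≤ x)).max'_mem (hne' y hy)
      simp only [Finset.mem_filter, Finset.mem_univ, true_and] at this
      exact this.1
    · have := (Finset.univ.filter (fun z => f z = y)).min'_mem (hne y)
      simp only [Finset.mem_filter, Finset.mem_univ, true_and] at this
      exact this
  have hgmono : Monotone g := by
    intro y1 y2 h12
    rcases eq_or_lt_of_le h12 with rfl | hlt
    · exact le_rfl
    · by_contra hc
      push_neg at hc
      have : f (g y2) ≤ f (g y1) := hmono hc.le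
      rw [hfg, hfg] at this
      exact absurd this (not_le.mpr hlt)
  have hgx : g (f x) = x := by
    simp only [hg, dif_pos (le_refl (f x))]
    apply le_antisymm
    · apply Finset.max'_le
      intro z hz
      simp only [Finset.mem_filter, Finset.mem_univ, true_and] at hz
      exact hz.2
    · apply Finset.le_max'
      simp
  refine ⟨SimplexCategory.mkHom ⟨g, hgmono⟩, ?_, hgx⟩
  apply SimplexCategory.Hom.ext
  apply OrderHom.ext
  funext y
  exact hfg y

/-- If a nondegenerate `τ` equals `g*ρ`, then `g` is injective. -/
lemma inj_of_nondegen (K : SSet) {m m' : ℕ} (τ : K _⦋m⦌) (hτ : ¬ IsDegen K τ)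
    (g : SimplexCategory.mk m ⟶ SimplexCategory.mk m') (ρ : K _⦋m'⦌)
    (h : τ = K.map g.op ρ) : Function.Injective ⇑g.toOrderHom := by
  obtain ⟨k, s, i, hs, hi, hsi⟩ := factor g
  have hτs : τ = K.map s.op (K.map i.op ρ) := by
    rw [h, ← hsi, op_comp, K.map_comp]; rfl
  have hkm : m ≤ k := by
    by_contra hk
    push_neg at hk
    exact hτ ⟨k, s, K.map i.op ρ, hk, hs, hτs⟩
  have hkm' : k ≤ m := by
    have : Epi s := SimplexCategory.epi_iff_surjective.mpr hs
    exact SimplexCategory.le_of_epi s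
  have hk : k = m := le_antisymm hkm' hkm
  subst hk
  have : Epi s := SimplexCategory.epi_iff_surjective.mpr hs
  have hsid : s = 𝟙 _ := SimplexCategory.eq_id_of_epi s
  rw [hsid, Category.id_comp] at hsi
  rw [← hsi]
  exact hi

end EZAux

/-- **Eilenberg–Zilber lemma.** Every `n`-simplex `σ` of a simplicial set `K`
admits a unique presentation `σ = θ*(τ)` with `θ : [n] → [m]` a surjective monotone map and
`τ` a nondegenerate `m`-simplex. -/
theorem eilenberg_zilber (K : SSet) (n : ℕ) (σ : K _⦋n⦌) :
    ∃! p : Σ m : ℕ, (SimplexCategory.mk n ⟶ SimplexCategory.mk m) × K _⦋m⦌,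
      Function.Surjective ⇑p.2.1.toOrderHom ∧ ¬ IsDegen K p.2.2 ∧ σ = K.map p.2.1.op p.2.2 := by
  obtain ⟨m, θ, τ, hθ, hτ, hσ⟩ := EZAux.exists_pres K n σ
  refine ⟨⟨m, θ, τ⟩, ⟨hθ, hτ, hσ⟩, ?_⟩
  rintro ⟨m', θ', τ'⟩ ⟨hθ', hτ', hσ'⟩
  -- general step: a section `d` of `θ'` yields `τ' = (d ≫ θ)* τ`
  have key : ∀ {a b : ℕ} (α : SimplexCategory.mk n ⟶ SimplexCategory.mk a)
      (β : SimplexCategory.mk n ⟶ SimplexCategory.mk b)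
      (ρa : K _⦋a⦌) (ρb : K _⦋b⦌)
      (d : SimplexCategory.mk a ⟶ SimplexCategory.mk n),
      d ≫ α = 𝟙 _ → σ = K.map α.op ρa → σ = K.map β.op ρb →
      ρa = K.map (d ≫ β).op ρb := by
    intro a b α β ρa ρb d hd ha hb
    have h1 : ρa = K.map d.op σ := by
      rw [ha, ← FunctorToTypes.map_comp_apply, ← op_comp, hd, op_id,
        FunctorToTypes.map_id_apply]
    rw [h1, hb, ← FunctorToTypes.map_comp_apply, ← op_comp]
  -- m' ≤ m and m ≤ m'
  have hle : ∀ {a b : ℕ} (α : SimplexCategory.mk n ⟶ SimplexCategory.mk a)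
      (β : SimplexCategory.mk n ⟶ SimplexCategory.mk b)
      (ρa : K _⦋a⦌) (ρb : K _⦋b⦌),
      Function.Surjective ⇑α.toOrderHom → ¬ IsDegen K ρa →
      σ = K.map α.op ρa → σ = K.map β.op ρb → a ≤ b := by
    intro a b α β ρa ρb hα hρa ha hb
    obtain ⟨d, hd, -⟩ := EZAux.exists_section α hα 0
    have := EZAux.inj_of_nondegen K ρa hρa (d ≫ β) ρb (key α β ρa ρb d hd ha hb)
    have := Fintype.card_le_of_injective _ this
    simpa using this
  have hmm' : m = m' := le_antisymm (hle θ θ' τ τ' hθ hτ hσ hσ')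
    (hle θ' θ τ' τ hθ' hτ' hσ' hσ)
  subst hmm'
  -- now show θ = θ' and τ = τ'
  have hθθ' : θ' = θ := by
    apply SimplexCategory.Hom.ext
    apply OrderHom.ext
    funext x
    obtain ⟨d, hd, hdx⟩ := EZAux.exists_section θ hθ x
    have hg := EZAux.inj_of_nondegen K τ hτ (d ≫ θ') τ' (key θ θ' τ τ' d hd hσ hσ')
    have : Mono (d ≫ θ') := SimplexCategory.mono_iff_injective.mpr hg
    have hgid : d ≫ θ' = 𝟙 _ := SimplexCategory.eq_id_of_mono _
    calc θ'.toOrderHom x = θ'.toOrderHom (d.toOrderHom (θ.toOrderHom x)) := by rw [hdx]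
      _ = (d ≫ θ').toOrderHom (θ.toOrderHom x) := by rw [SimplexCategory.comp_toOrderHom]; rfl
      _ = θ.toOrderHom x := by rw [hgid]; rfl
  have hττ' : τ' = τ := by
    obtain ⟨d, hd, -⟩ := EZAux.exists_section θ hθ 0
    have hfact := key θ θ' τ τ' d hd hσ hσ'
    have hg := EZAux.inj_of_nondegen K τ hτ (d ≫ θ') τ' hfact
    have : Mono (d ≫ θ') := SimplexCategory.mono_iff_injective.mpr hg
    have hgid : d ≫ θ' = 𝟙 _ := SimplexCategory.eq_id_of_mono _
    rw [hgid, op_id, FunctorToTypes.map_id_apply] at hfact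
    exact hfact.symm
  subst hθθ'
  subst hττ'
  rfl
end

section
/- Let K be a simplicial set with nondegenerate core, i.e. such that every face ∂_i τ of every nondegenerate simplex τ of K is nondegenerate. For each q ∈ ℕ let X_q be the set of pairs (τ, ρ) where τ is a nondegenerate l-simplex of K for some l ∈ ℕ and ρ : [q] → [l] is a surjective monotone map; for every monotone θ : [m] → [q] define θ*(τ, ρ) = (α*(τ), β), where ρ ∘ θ = α ∘ β is the unique factorization of ρ ∘ θ into a surjective monotone map β : [m] → [k] followed by an injective monotone map α : [k] → [l] (the simplex α*(τ) = K.map(α.op)(τ) is nondegenerate by the core hypothesis). Then these data define a simplicial set X (the structure maps satisfy (θ ∘ η)* = η* ∘ θ* and identities act as identities), and the map Θ : X → K given by Θ(τ, ρ) = ρ*(τ) = K.map(ρ.op)(τ) is an isomorphism of simplicial sets. -/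
open CategoryTheory Simplicial

/-- The `q`-simplices of the simplicial set `𝚫 core(K)` built from the core of `K`:
pairs `(τ, ρ)` of a nondegenerate `l`-simplex `τ` of `K` (for some `l`) and a surjective
monotone map `ρ : [q] → [l]`. -/
abbrev CoreObj (K : SSet) (q : ℕ) : Type _ :=
  {p : Σ l : ℕ, K.obj (Opposite.op (SimplexCategory.mk l)) ×
      (SimplexCategory.mk q ⟶ SimplexCategory.mk l) //
    ¬ IsDegen K p.2.1 ∧ Function.Surjective ⇑p.2.2.toOrderHom}

namespace CoreAux

open SimplexCategory

lemma coe_comp {a b c : SimplexCategory} (f : a ⟶ b) (g : b ⟶ c) :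
    ⇑(f ≫ g).toOrderHom = ⇑g.toOrderHom ∘ ⇑f.toOrderHom := rfl

lemma map_comp_apply (K : SSet) {a b c : SimplexCategory} (f : a ⟶ b) (g : b ⟶ c)
    (x : K.obj (Opposite.op c)) :
    K.map (f ≫ g).op x = K.map f.op (K.map g.op x) := by
  rw [op_comp, FunctorToTypes.map_comp_apply]

lemma map_id_apply (K : SSet) {a : SimplexCategory} (x : K.obj (Opposite.op a)) :
    K.map (𝟙 a).op x = x := by
  rw [op_id, FunctorToTypes.map_id_apply]

lemma surj_id (n : ℕ) :
    Function.Surjective ⇑(SimplexCategory.Hom.toOrderHom (𝟙 (mk n))) :=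
  fun x => ⟨x, rfl⟩

lemma inj_id (n : ℕ) :
    Function.Injective ⇑(SimplexCategory.Hom.toOrderHom (𝟙 (mk n))) :=
  fun _ _ h => h

lemma surj_to_zero {m : ℕ} (φ : mk m ⟶ mk 0) :
    Function.Surjective ⇑φ.toOrderHom := by
  intro y
  refine ⟨0, ?_⟩
  apply Fin.ext
  have h1 : ((Hom.toOrderHom φ) 0).val < 1 := by
    simp
  have h2 : y.val < 1 := by simp
  omega

lemma le_of_inj {k l : ℕ} (α : mk k ⟶ mk l) (h : Function.Injective ⇑α.toOrderHom) :
    k ≤ l := by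
  have := Fintype.card_le_of_injective _ h
  simpa using this

lemma le_of_surj {k l : ℕ} (α : mk k ⟶ mk l) (h : Function.Surjective ⇑α.toOrderHom) :
    l ≤ k := by
  have := Fintype.card_le_of_surjective _ h
  simpa using this

lemma inj_endo_eq_id {n : ℕ} (f : mk n ⟶ mk n) (hf : Function.Injective ⇑f.toOrderHom) :
    f = 𝟙 _ := by
  have : Mono f := mono_iff_injective.mpr hf
  exact eq_id_of_mono f

lemma surj_endo_eq_id {n : ℕ} (f : mk n ⟶ mk n) (hf : Function.Surjective ⇑f.toOrderHom) :
    f = 𝟙 _ := by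
  have : Epi f := epi_iff_surjective.mpr hf
  exact eq_id_of_epi f

/-- Existence of epi-mono factorizations with explicit `mk` objects. -/
lemma exists_fac : ∀ (q m : ℕ) (φ : mk m ⟶ mk q),
    ∃ (k : ℕ) (β : mk m ⟶ mk k) (α : mk k ⟶ mk q),
      Function.Surjective ⇑β.toOrderHom ∧ Function.Injective ⇑α.toOrderHom ∧
        φ = β ≫ α := by
  intro q
  induction q with
  | zero =>
    intro m φ
    exact ⟨0, φ, 𝟙 _, surj_to_zero φ, inj_id 0, (Category.comp_id φ).symm⟩
  | succ q ih =>
    intro m φ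
    by_cases h : Function.Surjective ⇑φ.toOrderHom
    · exact ⟨q + 1, φ, 𝟙 _, h, inj_id _, (Category.comp_id φ).symm⟩
    · obtain ⟨i, θ', hθ⟩ := eq_comp_δ_of_not_surjective φ h
      obtain ⟨k, β, α, hβ, hα, hfac⟩ := ih m θ'
      have hδ : Function.Injective ⇑(δ i).toOrderHom :=
        mono_iff_injective.mp inferInstance
      refine ⟨k, β, α ≫ δ i, hβ, ?_, ?_⟩
      · rw [coe_comp]
        exact hδ.comp hα
      · rw [hθ, hfac, Category.assoc]

/-- The image of a nondegenerate simplex under (the structure map of) an injective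
monotone map is nondegenerate, if `K` has nondegenerate core. -/
lemma nondeg_map_mono (K : SSet)
    (hcore : ∀ (l : ℕ) (τ : K _⦋l + 1⦌), ¬ IsDegen K τ →
      ∀ i : Fin (l + 2), ¬ IsDegen K (K.δ i τ)) :
    ∀ (l k : ℕ) (τ : K _⦋l⦌), ¬ IsDegen K τ → ∀ (α : mk k ⟶ mk l),
      Function.Injective ⇑α.toOrderHom → ¬ IsDegen K (K.map α.op τ) := by
  intro l
  induction l with
  | zero =>
    intro k τ hτ α hα
    have hk : k = 0 := Nat.le_zero.mp (le_of_inj α hα)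
    subst hk
    rw [inj_endo_eq_id α hα, map_id_apply]
    exact hτ
  | succ l ih =>
    intro k τ hτ α hα
    by_cases hs : Function.Surjective ⇑α.toOrderHom
    · have hk : k = l + 1 := le_antisymm (le_of_inj α hα) (le_of_surj α hs)
      subst hk
      rw [inj_endo_eq_id α hα, map_id_apply]
      exact hτ
    · obtain ⟨i, α', hfac⟩ := eq_comp_δ_of_not_surjective α hs
      have hα' : Function.Injective ⇑α'.toOrderHom := by
        intro a b hab
        apply hα
        rw [hfac, coe_comp, Function.comp_apply, Function.comp_apply, hab]
      have hmap : K.map α.op τ = K.map α'.op (K.δ i τ) := by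
        rw [hfac, map_comp_apply]
        rfl
      rw [hmap]
      exact ih k (K.δ i τ) (hcore l τ hτ i) α' hα'

/-- Existence of the Eilenberg–Zilber decomposition. -/
lemma exists_decomp (K : SSet) : ∀ (q : ℕ) (x : K _⦋q⦌),
    ∃ (l : ℕ) (ρ : mk q ⟶ mk l) (τ : K _⦋l⦌),
      ¬ IsDegen K τ ∧ Function.Surjective ⇑ρ.toOrderHom ∧ x = K.map ρ.op τ := by
  intro q
  induction q using Nat.strong_induction_on with
  | _ q ih =>
    intro x
    by_cases h : IsDegen K x
    · obtain ⟨m, θ, τ', hm, hθ, hx⟩ := h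
      obtain ⟨l, ρ', τ, hτ, hρ', hτ'⟩ := ih m hm τ'
      refine ⟨l, θ ≫ ρ', τ, hτ, ?_, ?_⟩
      · rw [coe_comp]
        exact hρ'.comp hθ
      · rw [map_comp_apply, ← hτ', hx]
    · exact ⟨q, 𝟙 _, x, h, surj_id q, (map_id_apply K x).symm⟩

/-- A surjective monotone map has a monotone section through any designated point. -/
lemma exists_section {q l : ℕ} (ρ : mk q ⟶ mk l)
    (hρ : Function.Surjective ⇑ρ.toOrderHom) (x : Fin (q + 1)) :
    ∃ s : mk l ⟶ mk q, s ≫ ρ = 𝟙 _ ∧ s.toOrderHom (ρ.toOrderHom x) = x := by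
  classical
  set f : Fin (l + 1) → Fin (q + 1) :=
    fun j => if j = ρ.toOrderHom x then x else (hρ j).choose with hf_def
  have hf : ∀ j, ρ.toOrderHom (f j) = j := by
    intro j
    by_cases hj : j = ρ.toOrderHom x
    · rw [hf_def]
      dsimp only
      rw [if_pos hj]
      exact hj.symm
    · rw [hf_def]
      dsimp only
      rw [if_neg hj]
      exact (hρ j).choose_spec
  have hmono : Monotone f := by
    intro a b hab
    rcases eq_or_lt_of_le hab with h | h
    · exact le_of_eq (congrArg f h)
    · by_contra hc
      have hba : f b ≤ f a := le_of_not_ge hc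
      have hle := ρ.toOrderHom.monotone hba
      rw [hf a, hf b] at hle
      exact absurd h (not_lt.mpr hle)
  refine ⟨SimplexCategory.mkHom ⟨f, hmono⟩, ?_, ?_⟩
  · apply SimplexCategory.Hom.ext
    apply OrderHom.ext
    funext j
    show ρ.toOrderHom (f j) = j
    exact hf j
  · show f (ρ.toOrderHom x) = x
    rw [hf_def]
    dsimp only
    rw [if_pos rfl]

lemma eq_map_section (K : SSet) {q l l' : ℕ} (ρ : mk q ⟶ mk l) (ρ' : mk q ⟶ mk l')
    (τ : K _⦋l⦌) (τ' : K _⦋l'⦌) (h : K.map ρ.op τ = K.map ρ'.op τ')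
    (s : mk l ⟶ mk q) (hs : s ≫ ρ = 𝟙 _) : τ = K.map (s ≫ ρ').op τ' := by
  calc τ = K.map (s ≫ ρ).op τ := by rw [hs, map_id_apply]
    _ = K.map s.op (K.map ρ.op τ) := map_comp_apply K s ρ τ
    _ = K.map s.op (K.map ρ'.op τ') := by rw [h]
    _ = K.map (s ≫ ρ').op τ' := (map_comp_apply K s ρ' τ').symm

lemma exists_inj_of_eq (K : SSet) {q l l' : ℕ} (ρ : mk q ⟶ mk l) (ρ' : mk q ⟶ mk l')
    (τ : K _⦋l⦌) (τ' : K _⦋l'⦌) (hτ : ¬ IsDegen K τ)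
    (hρ : Function.Surjective ⇑ρ.toOrderHom)
    (h : K.map ρ.op τ = K.map ρ'.op τ') :
    ∃ α : mk l ⟶ mk l', Function.Injective ⇑α.toOrderHom ∧ τ = K.map α.op τ' := by
  obtain ⟨s, hs, -⟩ := exists_section ρ hρ 0
  have hτs : τ = K.map (s ≫ ρ').op τ' := eq_map_section K ρ ρ' τ τ' h s hs
  obtain ⟨k, β, α, hβ, hα, hfac⟩ := exists_fac l' l (s ≫ ρ')
  rcases lt_or_eq_of_le (le_of_surj β hβ) with hlt | heq
  · refine absurd ⟨k, β, K.map α.op τ', hlt, hβ, ?_⟩ hτ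
    nth_rewrite 1 [hτs]
    rw [hfac, map_comp_apply]
  · subst heq
    refine ⟨α, hα, ?_⟩
    rw [hτs, hfac, map_comp_apply, surj_endo_eq_id β hβ, map_id_apply]

lemma section_comp (K : SSet) {q l : ℕ} (ρ ρ' : mk q ⟶ mk l) (τ : K _⦋l⦌)
    (hτ : ¬ IsDegen K τ) (h : K.map ρ.op τ = K.map ρ'.op τ)
    (s : mk l ⟶ mk q) (hs : s ≫ ρ = 𝟙 _) : s ≫ ρ' = 𝟙 _ := by
  have hτs : τ = K.map (s ≫ ρ').op τ := eq_map_section K ρ ρ' τ τ h s hs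
  obtain ⟨k, β, α, hβ, hα, hfac⟩ := exists_fac l l (s ≫ ρ')
  rcases lt_or_eq_of_le (le_of_surj β hβ) with hlt | heq
  · refine absurd ⟨k, β, K.map α.op τ, hlt, hβ, ?_⟩ hτ
    nth_rewrite 1 [hτs]
    rw [hfac, map_comp_apply]
  · subst heq
    rw [hfac, surj_endo_eq_id β hβ, inj_endo_eq_id α hα, Category.comp_id]

/-- Uniqueness of the Eilenberg–Zilber decomposition: `Θ` is injective. -/
lemma theta_inj (K : SSet) {q : ℕ} :
    Function.Injective (fun p : CoreObj K q => K.map p.1.2.2.op p.1.2.1) := by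
  rintro ⟨⟨l, τ, ρ⟩, hτ, hρ⟩ ⟨⟨l', τ', ρ'⟩, hτ', hρ'⟩ h
  dsimp only at h
  obtain ⟨α, hα, hτα⟩ := exists_inj_of_eq K ρ ρ' τ τ' hτ hρ h
  obtain ⟨α', hα', -⟩ := exists_inj_of_eq K ρ' ρ τ' τ hτ' hρ' h.symm
  have hll : l = l' := le_antisymm (le_of_inj α hα) (le_of_inj α' hα')
  subst hll
  rw [inj_endo_eq_id α hα, map_id_apply] at hτα
  subst hτα
  have hρρ : ρ = ρ' := by
    apply SimplexCategory.Hom.ext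
    apply OrderHom.ext
    funext x
    obtain ⟨s, hs, hsx⟩ := exists_section ρ hρ x
    have h2 := section_comp K ρ ρ' τ hτ h s hs
    have h3 : (s ≫ ρ').toOrderHom (ρ.toOrderHom x) = ρ.toOrderHom x := by
      rw [h2]; rfl
    calc ρ.toOrderHom x = (s ≫ ρ').toOrderHom (ρ.toOrderHom x) := h3.symm
      _ = ρ'.toOrderHom (s.toOrderHom (ρ.toOrderHom x)) := rfl
      _ = ρ'.toOrderHom x := by rw [hsx]
  subst hρρ
  exact Subtype.ext rfl

end CoreAux

/-- If `K` has nondegenerate core (all faces of nondegenerate simplices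
are nondegenerate), then the pairs `(τ, ρ)` of a nondegenerate simplex and a surjective
monotone map form a simplicial set, with structure maps `θ*(τ, ρ) = (α*(τ), β)` given by the
unique surjective/injective factorization `ρ ∘ θ = α ∘ β`, and the canonical map
`Θ(τ, ρ) = ρ*(τ)` is an isomorphism of simplicial sets onto `K` (a natural bijection in
every degree). -/
theorem core_reconstruction (K : SSet)
    (hcore : ∀ (l : ℕ) (τ : K _⦋l + 1⦌), ¬ IsDegen K τ →
      ∀ i : Fin (l + 2), ¬ IsDegen K (K.δ i τ)) :
    ∃ Xmap : ∀ (m q : ℕ), (SimplexCategory.mk m ⟶ SimplexCategory.mk q) →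
        CoreObj K q → CoreObj K m,
      -- the structure maps are given by the epi-mono factorization:
      -- `θ*(τ, ρ) = (α*(τ), β)` where `ρ ∘ θ = α ∘ β`, `β` surjective, `α` injective
      (∀ (m q : ℕ) (θ : SimplexCategory.mk m ⟶ SimplexCategory.mk q) (p : CoreObj K q),
        ∃ (kk : ℕ) (β : SimplexCategory.mk m ⟶ SimplexCategory.mk kk)
          (α : SimplexCategory.mk kk ⟶ SimplexCategory.mk p.1.1),
          Function.Surjective ⇑β.toOrderHom ∧ Function.Injective ⇑α.toOrderHom ∧
          θ ≫ p.1.2.2 = β ≫ α ∧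
          ∃ h : ¬ IsDegen K (K.map α.op p.1.2.1) ∧ Function.Surjective ⇑β.toOrderHom,
            Xmap m q θ p = ⟨⟨kk, (K.map α.op p.1.2.1, β)⟩, h⟩) ∧
      -- identities act as identities
      (∀ (q : ℕ) (p : CoreObj K q), Xmap q q (𝟙 _) p = p) ∧
      -- `(θ ∘ η)* = η* ∘ θ*`
      (∀ (m m' q : ℕ) (η : SimplexCategory.mk m ⟶ SimplexCategory.mk m')
          (θ : SimplexCategory.mk m' ⟶ SimplexCategory.mk q) (p : CoreObj K q),
        Xmap m q (η ≫ θ) p = Xmap m m' η (Xmap m' q θ p)) ∧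
      -- `Θ(τ, ρ) = ρ*(τ)` is bijective in every degree
      (∀ q : ℕ, Function.Bijective fun p : CoreObj K q => K.map p.1.2.2.op p.1.2.1) ∧
      -- and `Θ` is a simplicial map
      (∀ (m q : ℕ) (θ : SimplexCategory.mk m ⟶ SimplexCategory.mk q) (p : CoreObj K q),
        K.map θ.op (K.map p.1.2.2.op p.1.2.1)
          = K.map (Xmap m q θ p).1.2.2.op (Xmap m q θ p).1.2.1) := by
  classical
  choose k β α hβ hα hfac using
    fun (m q : ℕ) (φ : SimplexCategory.mk m ⟶ SimplexCategory.mk q) =>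
      CoreAux.exists_fac q m φ
  obtain ⟨X, hXdef⟩ :
      ∃ X : ∀ (m q : ℕ), (SimplexCategory.mk m ⟶ SimplexCategory.mk q) →
          CoreObj K q → CoreObj K m,
        ∀ (m q : ℕ) (θ : SimplexCategory.mk m ⟶ SimplexCategory.mk q)
          (p : CoreObj K q),
          ∃ h, X m q θ p = ⟨⟨k m p.1.1 (θ ≫ p.1.2.2),
            (K.map (α m p.1.1 (θ ≫ p.1.2.2)).op p.1.2.1,
              β m p.1.1 (θ ≫ p.1.2.2))⟩, h⟩ :=
    ⟨fun m q θ p => ⟨⟨k m p.1.1 (θ ≫ p.1.2.2),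
        (K.map (α m p.1.1 (θ ≫ p.1.2.2)).op p.1.2.1, β m p.1.1 (θ ≫ p.1.2.2))⟩,
        CoreAux.nondeg_map_mono K hcore p.1.1 _ p.1.2.1 p.2.1 _
          (hα m p.1.1 (θ ≫ p.1.2.2)),
        hβ m p.1.1 (θ ≫ p.1.2.2)⟩,
      fun m q θ p => ⟨_, rfl⟩⟩
  have hnat : ∀ (m q : ℕ) (θ : SimplexCategory.mk m ⟶ SimplexCategory.mk q)
      (p : CoreObj K q),
      K.map (X m q θ p).1.2.2.op (X m q θ p).1.2.1
        = K.map θ.op (K.map p.1.2.2.op p.1.2.1) := by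
    intro m q θ p
    obtain ⟨h, hp⟩ := hXdef m q θ p
    rw [hp]
    show K.map (β m p.1.1 (θ ≫ p.1.2.2)).op
        (K.map (α m p.1.1 (θ ≫ p.1.2.2)).op p.1.2.1)
      = K.map θ.op (K.map p.1.2.2.op p.1.2.1)
    rw [← CoreAux.map_comp_apply, ← hfac, CoreAux.map_comp_apply]
  refine ⟨X, ?_, ?_, ?_, ?_, ?_⟩
  · intro m q θ p
    obtain ⟨h, hp⟩ := hXdef m q θ p
    exact ⟨k m p.1.1 (θ ≫ p.1.2.2), β m p.1.1 (θ ≫ p.1.2.2),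
      α m p.1.1 (θ ≫ p.1.2.2), hβ m p.1.1 (θ ≫ p.1.2.2),
      hα m p.1.1 (θ ≫ p.1.2.2), hfac m p.1.1 (θ ≫ p.1.2.2), h, hp⟩
  · intro q p
    apply CoreAux.theta_inj K
    show K.map (X q q (𝟙 _) p).1.2.2.op (X q q (𝟙 _) p).1.2.1
      = K.map p.1.2.2.op p.1.2.1
    rw [hnat, CoreAux.map_id_apply]
  · intro m m' q η θ p
    apply CoreAux.theta_inj K
    show K.map (X m q (η ≫ θ) p).1.2.2.op (X m q (η ≫ θ) p).1.2.1
      = K.map (X m m' η (X m' q θ p)).1.2.2.op (X m m' η (X m' q θ p)).1.2.1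
    rw [hnat, hnat, hnat, CoreAux.map_comp_apply]
  · intro q
    refine ⟨CoreAux.theta_inj K, ?_⟩
    intro x
    obtain ⟨l, ρ, τ, hτ, hρ, hx⟩ := CoreAux.exists_decomp K q x
    exact ⟨⟨⟨l, τ, ρ⟩, hτ, hρ⟩, hx.symm⟩
  · intro m q θ p
    exact (hnat m q θ p).symm
end
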